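/- arXiv:2509.23319 — 2 statements merged into one kernel-verified Lean document; each statement's English description precedes it below -/
import Mathlib

section
/- Let X be a nontrivial real Banach space. Then C_Z(X) = sup{ 4·C_Z^I((1 − η)/2) / (1 + η²) : η ∈ [0, 1] }. -/
open Set

/-- `C_Z^I(t)`: the sup of `‖t•x + (1-t)•y‖ * ‖(1-t)•x + t•y‖ / ‖x+y‖²` over
pairs `(x, y) ≠ (0, 0)` that are isosceles orthogonal (`‖x+y‖ = ‖x-y‖`). -/
noncomputable def CZI (X : Type*) [NormedAddCommGroup X] [NormedSpace ℝ X] (t : ℝ) : ℝ :=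
  sSup { r : ℝ | ∃ x y : X, (x, y) ≠ (0, 0) ∧ ‖x + y‖ = ‖x - y‖ ∧
    r = ‖t • x + (1 - t) • y‖ * ‖(1 - t) • x + t • y‖ / ‖x + y‖ ^ 2 }

/-- The Zbăganu constant `C_Z(X)`. -/
noncomputable def CZ (X : Type*) [NormedAddCommGroup X] [NormedSpace ℝ X] : ℝ :=
  sSup { r : ℝ | ∃ x y : X, (x, y) ≠ (0, 0) ∧
    r = ‖x + y‖ * ‖x - y‖ / (‖x‖ ^ 2 + ‖y‖ ^ 2) }

section Aux

variable {X : Type*} [NormedAddCommGroup X] [NormedSpace ℝ X]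

lemma iso_pos {u v : X} (hne : (u, v) ≠ (0, 0)) (h : ‖u + v‖ = ‖u - v‖) :
    0 < ‖u + v‖ := by
  rcases (norm_nonneg (u + v)).lt_or_eq with hlt | heq
  · exact hlt
  · exfalso
    have hs : u + v = 0 := norm_eq_zero.mp heq.symm
    have hd : u - v = 0 := norm_eq_zero.mp (by rw [← h]; exact heq.symm)
    have h2 : (2 : ℝ) • u = 0 := by
      have h3 : (2 : ℝ) • u = (u + v) + (u - v) := by module
      rw [h3, hs, hd, add_zero]
    have hu : u = 0 := by
      rcases smul_eq_zero.mp h2 with h' | h'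
      · norm_num at h'
      · exact h'
    have hv : v = 0 := by
      have h4 : v = (u + v) - u := by abel
      rw [h4, hs, hu, sub_zero]
    exact hne (by simp [hu, hv])

lemma aux_norm_le {t : ℝ} (ht : |t - 2⁻¹| ≤ 2⁻¹) {u v : X} (h : ‖u + v‖ = ‖u - v‖) :
    ‖t • u + (1 - t) • v‖ ≤ ‖u + v‖ := by
  have key : t • u + (1 - t) • v = (2⁻¹ : ℝ) • (u + v) + (t - 2⁻¹) • (u - v) := by module
  rw [key]
  calc ‖(2⁻¹ : ℝ) • (u + v) + (t - 2⁻¹) • (u - v)‖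
      ≤ ‖(2⁻¹ : ℝ) • (u + v)‖ + ‖(t - 2⁻¹) • (u - v)‖ := norm_add_le _ _
    _ = 2⁻¹ * ‖u + v‖ + |t - 2⁻¹| * ‖u + v‖ := by
        rw [norm_smul, norm_smul, Real.norm_eq_abs, Real.norm_eq_abs, ← h]
        norm_num
    _ ≤ 2⁻¹ * ‖u + v‖ + 2⁻¹ * ‖u + v‖ := by gcongr
    _ = ‖u + v‖ := by ring

lemma czi_elem_le_one {t : ℝ} (ht : |t - 2⁻¹| ≤ 2⁻¹) :
    ∀ r ∈ { r : ℝ | ∃ x y : X, (x, y) ≠ (0, 0) ∧ ‖x + y‖ = ‖x - y‖ ∧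
      r = ‖t • x + (1 - t) • y‖ * ‖(1 - t) • x + t • y‖ / ‖x + y‖ ^ 2 }, r ≤ 1 := by
  rintro r ⟨x, y, hne, h, rfl⟩
  have hpos := iso_pos hne h
  rw [div_le_one (by positivity)]
  have h1 : ‖t • x + (1 - t) • y‖ ≤ ‖x + y‖ := aux_norm_le ht h
  have h2 : ‖(1 - t) • x + t • y‖ ≤ ‖x + y‖ := by
    have ht' : |(1 - t) - 2⁻¹| ≤ 2⁻¹ := by
      rw [show (1 : ℝ) - t - 2⁻¹ = -(t - 2⁻¹) by ring, abs_neg]; exact ht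
    have h2' := aux_norm_le (t := 1 - t) ht' h
    rwa [show (1 : ℝ) - (1 - t) = t by ring] at h2'
  calc ‖t • x + (1 - t) • y‖ * ‖(1 - t) • x + t • y‖
      ≤ ‖x + y‖ * ‖x + y‖ :=
        mul_le_mul h1 h2 (norm_nonneg _) (norm_nonneg _)
    _ = ‖x + y‖ ^ 2 := by ring

lemma czi_nonneg (X : Type*) [NormedAddCommGroup X] [NormedSpace ℝ X] (t : ℝ) :
    0 ≤ CZI X t := by
  apply Real.sSup_nonneg
  rintro r ⟨x, y, _, _, rfl⟩
  positivity

lemma czi_le_one {t : ℝ} (ht : |t - 2⁻¹| ≤ 2⁻¹) : CZI (X := X) t ≤ 1 := by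
  unfold CZI
  exact Real.sSup_le (czi_elem_le_one ht) zero_le_one

lemma cz_elem_le_two :
    ∀ r ∈ { r : ℝ | ∃ x y : X, (x, y) ≠ (0, 0) ∧
      r = ‖x + y‖ * ‖x - y‖ / (‖x‖ ^ 2 + ‖y‖ ^ 2) }, r ≤ 2 := by
  rintro r ⟨x, y, hne, rfl⟩
  have hd : 0 < ‖x‖ ^ 2 + ‖y‖ ^ 2 := by
    have hxy : x ≠ 0 ∨ y ≠ 0 := by
      by_contra hc
      push_neg at hc
      exact hne (by simp [hc.1, hc.2])
    rcases hxy with h | h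
    · have := norm_pos_iff.mpr h; positivity
    · have := norm_pos_iff.mpr h; positivity
  rw [div_le_iff₀ hd]
  nlinarith [norm_add_le x y, norm_sub_le x y, sq_nonneg (‖x‖ - ‖y‖),
    norm_nonneg x, norm_nonneg y, norm_nonneg (x + y), norm_nonneg (x - y)]

lemma main_le_aux (x y : X) (hx : x ≠ 0) (hle : ‖y‖ ≤ ‖x‖) :
    ‖x + y‖ * ‖x - y‖ / (‖x‖ ^ 2 + ‖y‖ ^ 2) ≤
      sSup { r : ℝ | ∃ η ∈ Icc (0 : ℝ) 1,
        r = 4 * CZI X ((1 - η) / 2) / (1 + η ^ 2) } := by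
  classical
  have hxn : (0 : ℝ) < ‖x‖ := norm_pos_iff.mpr hx
  set η : ℝ := ‖y‖ / ‖x‖ with hηdef
  have h0 : 0 ≤ η := by positivity
  have h1 : η ≤ 1 := by rw [hηdef, div_le_one hxn]; exact hle
  have hyx : ‖y‖ = η * ‖x‖ := by rw [hηdef]; field_simp
  set b : X := if y = 0 then x else (‖x‖ / ‖y‖) • y with hbdef
  have hb : ‖b‖ = ‖x‖ := by
    by_cases hy : y = 0
    · simp [hbdef, hy]
    · have hyn : (0 : ℝ) < ‖y‖ := norm_pos_iff.mpr hy
      rw [hbdef, if_neg hy, norm_smul, Real.norm_eq_abs, abs_of_nonneg (by positivity)]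
      field_simp
  have hby : η • b = y := by
    by_cases hy : y = 0
    · simp [hbdef, hηdef, hy]
    · have hyn : (0 : ℝ) < ‖y‖ := norm_pos_iff.mpr hy
      rw [hbdef, if_neg hy, smul_smul, hηdef,
        show ‖y‖ / ‖x‖ * (‖x‖ / ‖y‖) = 1 by field_simp, one_smul]
  set u : X := (2⁻¹ : ℝ) • (x + b) with hudef
  set v : X := (2⁻¹ : ℝ) • (x - b) with hvdef
  have huv : u + v = x := by rw [hudef, hvdef]; module
  have huv' : u - v = b := by rw [hudef, hvdef]; module
  set t : ℝ := (1 - η) / 2 with htdef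
  have hne : (u, v) ≠ (0, 0) := by
    intro hc
    simp only [Prod.mk.injEq] at hc
    apply hx
    rw [← huv, hc.1, hc.2, add_zero]
  have ht : |t - 2⁻¹| ≤ 2⁻¹ := by
    rw [htdef, abs_le]
    constructor <;> linarith
  have e1 : t • u + (1 - t) • v = (2⁻¹ : ℝ) • (x - y) := by
    rw [← hby, hudef, hvdef, htdef]; module
  have e2 : (1 - t) • u + t • v = (2⁻¹ : ℝ) • (x + y) := by
    rw [← hby, hudef, hvdef, htdef]; module
  have hmem : ‖t • u + (1 - t) • v‖ * ‖(1 - t) • u + t • v‖ / ‖u + v‖ ^ 2 ∈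
      { r : ℝ | ∃ x y : X, (x, y) ≠ (0, 0) ∧ ‖x + y‖ = ‖x - y‖ ∧
        r = ‖t • x + (1 - t) • y‖ * ‖(1 - t) • x + t • y‖ / ‖x + y‖ ^ 2 } :=
    ⟨u, v, hne, by rw [huv, huv', hb], rfl⟩
  have hr0 : ‖t • u + (1 - t) • v‖ * ‖(1 - t) • u + t • v‖ / ‖u + v‖ ^ 2 ≤ CZI X t := by
    unfold CZI
    exact le_csSup ⟨1, fun r hr => czi_elem_le_one ht r hr⟩ hmem
  have hval : ‖t • u + (1 - t) • v‖ * ‖(1 - t) • u + t • v‖ / ‖u + v‖ ^ 2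
      = ‖x + y‖ * ‖x - y‖ / (4 * ‖x‖ ^ 2) := by
    rw [e1, e2, huv, norm_smul, norm_smul, Real.norm_eq_abs,
      show |(2⁻¹ : ℝ)| = 2⁻¹ by norm_num]
    ring
  have hTbdd : BddAbove { r : ℝ | ∃ η ∈ Icc (0 : ℝ) 1,
      r = 4 * CZI X ((1 - η) / 2) / (1 + η ^ 2) } := by
    refine ⟨4, ?_⟩
    rintro r ⟨η', ⟨h0', h1'⟩, rfl⟩
    have hle1 : CZI X ((1 - η') / 2) ≤ 1 := by
      apply czi_le_one
      rw [abs_le]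
      constructor <;> linarith
    have hge0 := czi_nonneg X ((1 - η') / 2)
    calc (4 : ℝ) * CZI X ((1 - η') / 2) / (1 + η' ^ 2)
        ≤ 4 / 1 := by
          apply div_le_div₀ (by norm_num) (by linarith) (by norm_num) (by nlinarith)
      _ = 4 := by norm_num
  calc ‖x + y‖ * ‖x - y‖ / (‖x‖ ^ 2 + ‖y‖ ^ 2)
      = 4 * (‖x + y‖ * ‖x - y‖ / (4 * ‖x‖ ^ 2)) / (1 + η ^ 2) := by
        rw [hyx]
        have hne1 : (1 : ℝ) + η ^ 2 ≠ 0 := by positivity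
        field_simp
    _ = 4 * (‖t • u + (1 - t) • v‖ * ‖(1 - t) • u + t • v‖ / ‖u + v‖ ^ 2) / (1 + η ^ 2) := by
        rw [hval]
    _ ≤ 4 * CZI X t / (1 + η ^ 2) := by
        apply div_le_div_of_nonneg_right ?_ (by positivity)
        linarith
    _ ≤ sSup { r : ℝ | ∃ η ∈ Icc (0 : ℝ) 1,
          r = 4 * CZI X ((1 - η) / 2) / (1 + η ^ 2) } :=
        le_csSup hTbdd ⟨η, ⟨h0, h1⟩, rfl⟩

end Aux

theorem stmt_7 (X : Type*) [NormedAddCommGroup X] [NormedSpace ℝ X]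
    [CompleteSpace X] [Nontrivial X] :
    CZ X = sSup { r : ℝ | ∃ η ∈ Icc (0 : ℝ) 1,
      r = 4 * CZI X ((1 - η) / 2) / (1 + η ^ 2) } := by
  apply le_antisymm
  · -- CZ X ≤ sSup T
    unfold CZ
    apply Real.sSup_le
    · rintro r ⟨x, y, hxy, rfl⟩
      rcases le_total ‖y‖ ‖x‖ with hle | hle
      · have hx : x ≠ 0 := by
          intro hc
          apply hxy
          have hy : y = 0 := by
            rw [hc, norm_zero] at hle
            exact norm_le_zero_iff.mp hle
          rw [hc, hy]
        exact main_le_aux x y hx hle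
      · have hy : y ≠ 0 := by
          intro hc
          apply hxy
          have hx : x = 0 := by
            rw [hc, norm_zero] at hle
            exact norm_le_zero_iff.mp hle
          rw [hc, hx]
        have h := main_le_aux y x hy hle
        rwa [add_comm y x, norm_sub_rev y x, add_comm (‖y‖ ^ 2)] at h
    · apply Real.sSup_nonneg
      rintro r ⟨η, ⟨h0, h1⟩, rfl⟩
      have := czi_nonneg X ((1 - η) / 2)
      positivity
  · apply Real.sSup_le
    · rintro r ⟨η, ⟨h0, h1⟩, rfl⟩
      have hCZnn : 0 ≤ CZ X := by
        apply Real.sSup_nonneg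
        rintro r ⟨x, y, _, rfl⟩
        positivity
      rw [div_le_iff₀ (by positivity)]
      have key : CZI X ((1 - η) / 2) ≤ CZ X * (1 + η ^ 2) / 4 := by
        apply Real.sSup_le
        · rintro r ⟨u, v, hne, h, rfl⟩
          have hpos := iso_pos hne h
          have hne' : (u + v, η • (u - v)) ≠ (0, 0) := by
            intro hc
            simp only [Prod.mk.injEq] at hc
            exact (norm_pos_iff.mp hpos) hc.1
          have e1 : (u + v) + η • (u - v)
              = (2 : ℝ) • ((1 - (1 - η) / 2) • u + ((1 - η) / 2) • v) := by module
          have e2 : (u + v) - η • (u - v)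
              = (2 : ℝ) • (((1 - η) / 2) • u + (1 - (1 - η) / 2) • v) := by module
          have hy' : ‖η • (u - v)‖ = η * ‖u + v‖ := by
            rw [norm_smul, Real.norm_eq_abs, abs_of_nonneg h0, ← h]
          have hle : ‖(u + v) + η • (u - v)‖ * ‖(u + v) - η • (u - v)‖ /
              (‖u + v‖ ^ 2 + ‖η • (u - v)‖ ^ 2) ≤ CZ X := by
            unfold CZ
            exact le_csSup ⟨2, fun r hr => cz_elem_le_two r hr⟩
              ⟨u + v, η • (u - v), hne', rfl⟩
          rw [e1, e2, hy', norm_smul, norm_smul, Real.norm_eq_abs,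
            show |(2 : ℝ)| = 2 by norm_num] at hle
          have hc2 : ‖u + v‖ ^ 2 + (η * ‖u + v‖) ^ 2 = (1 + η ^ 2) * ‖u + v‖ ^ 2 := by ring
          rw [hc2] at hle
          have hne1 : (1 : ℝ) + η ^ 2 ≠ 0 := by positivity
          have hq : ‖((1 - η) / 2) • u + (1 - (1 - η) / 2) • v‖ *
                ‖(1 - (1 - η) / 2) • u + ((1 - η) / 2) • v‖ / ‖u + v‖ ^ 2
              = (2 * ‖(1 - (1 - η) / 2) • u + ((1 - η) / 2) • v‖ *
                  (2 * ‖((1 - η) / 2) • u + (1 - (1 - η) / 2) • v‖) /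
                  ((1 + η ^ 2) * ‖u + v‖ ^ 2)) * ((1 + η ^ 2) / 4) := by
            field_simp
            ring
          rw [hq]
          calc (2 * ‖(1 - (1 - η) / 2) • u + ((1 - η) / 2) • v‖ *
                  (2 * ‖((1 - η) / 2) • u + (1 - (1 - η) / 2) • v‖) /
                  ((1 + η ^ 2) * ‖u + v‖ ^ 2)) * ((1 + η ^ 2) / 4)
              ≤ CZ X * ((1 + η ^ 2) / 4) :=
                mul_le_mul_of_nonneg_right hle (by positivity)
            _ = CZ X * (1 + η ^ 2) / 4 := by ring
        · positivity
      linarith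
    · apply Real.sSup_nonneg
      rintro r ⟨x, y, _, rfl⟩
      positivity
end

section
/- Let X be a nontrivial real Banach space. If lim_{t→(1/2)⁻} (2·C_Z^I(t) − 1/2)/(1 − 2t) = 0, then X is uniformly smooth, i.e., lim_{t→0⁺} ρ_X(t)/t = 0. -/
open Set Filter

/-- The modulus of smoothness `ρ_X(t)`. -/
noncomputable def rhoX (X : Type*) [NormedAddCommGroup X] [NormedSpace ℝ X] (t : ℝ) : ℝ :=
  sSup { r : ℝ | ∃ x y : X, ‖x‖ = 1 ∧ ‖y‖ = 1 ∧
    r = (‖x + t • y‖ + ‖x - t • y‖) / 2 - 1 }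

section Aux

variable {X : Type*} [NormedAddCommGroup X] [NormedSpace ℝ X]

lemma czi_bddAbove (t : ℝ) :
    BddAbove { r : ℝ | ∃ x y : X, (x, y) ≠ (0, 0) ∧ ‖x + y‖ = ‖x - y‖ ∧
      r = ‖t • x + (1 - t) • y‖ * ‖(1 - t) • x + t • y‖ / ‖x + y‖ ^ 2 } := by
  refine ⟨((1 + |1 - 2*t|)/2)^2, ?_⟩
  rintro r ⟨x, y, hxy, hiso, rfl⟩
  have hxy0 : ‖x + y‖ ≠ 0 := by
    intro h0
    have h1 : x + y = 0 := norm_eq_zero.mp h0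
    have h2 : x - y = 0 := by
      have h2' := hiso
      rw [h0] at h2'
      exact norm_eq_zero.mp h2'.symm
    apply hxy
    have h3 : (2:ℝ) • x = (x + y) + (x - y) := by module
    rw [h1, h2, add_zero] at h3
    have hx : x = 0 := by
      rcases smul_eq_zero.mp h3 with h | h
      · norm_num at h
      · exact h
    have hy : y = 0 := by
      rw [hx, zero_add] at h1
      exact h1
    rw [hx, hy]
  have hupos : 0 < ‖x + y‖ := lt_of_le_of_ne (norm_nonneg _) (Ne.symm hxy0)
  have habs : |(1 - 2*t)/2| = |1 - 2*t|/2 := by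
    rw [abs_div]; norm_num
  have hA : ‖t • x + (1 - t) • y‖ ≤ (1 + |1 - 2*t|)/2 * ‖x + y‖ := by
    have hid : t • x + (1 - t) • y = (2⁻¹ : ℝ) • (x + y) - ((1 - 2*t)/2) • (x - y) := by
      module
    rw [hid]
    have := norm_sub_le ((2⁻¹ : ℝ) • (x + y)) (((1 - 2*t)/2) • (x - y))
    rw [norm_smul, norm_smul, ← hiso] at this
    simp only [Real.norm_eq_abs, habs] at this
    rw [show |(2:ℝ)⁻¹| = 2⁻¹ by norm_num] at this
    nlinarith [abs_nonneg (1 - 2*t), norm_nonneg (x + y)]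
  have hB : ‖(1 - t) • x + t • y‖ ≤ (1 + |1 - 2*t|)/2 * ‖x + y‖ := by
    have hid : (1 - t) • x + t • y = (2⁻¹ : ℝ) • (x + y) + ((1 - 2*t)/2) • (x - y) := by
      module
    rw [hid]
    have := norm_add_le ((2⁻¹ : ℝ) • (x + y)) (((1 - 2*t)/2) • (x - y))
    rw [norm_smul, norm_smul, ← hiso] at this
    simp only [Real.norm_eq_abs, habs] at this
    rw [show |(2:ℝ)⁻¹| = 2⁻¹ by norm_num] at this
    nlinarith [abs_nonneg (1 - 2*t), norm_nonneg (x + y)]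
  rw [div_le_iff₀ (by positivity)]
  have hc : (0:ℝ) ≤ (1 + |1 - 2*t|)/2 := by positivity
  nlinarith [mul_le_mul hA hB (norm_nonneg _) (by positivity :
    (0:ℝ) ≤ (1 + |1 - 2*t|)/2 * ‖x + y‖), norm_nonneg (t • x + (1 - t) • y)]

lemma czi_elem (t : ℝ) {a b : X} (ha : ‖a‖ = 1) (hb : ‖b‖ = 1) :
    ‖a + (1 - 2*t) • b‖ * ‖a - (1 - 2*t) • b‖ / 4 ∈
    { r : ℝ | ∃ x y : X, (x, y) ≠ (0, 0) ∧ ‖x + y‖ = ‖x - y‖ ∧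
      r = ‖t • x + (1 - t) • y‖ * ‖(1 - t) • x + t • y‖ / ‖x + y‖ ^ 2 } := by
  refine ⟨a + b, a - b, ?_, ?_, ?_⟩
  · intro hc
    rw [Prod.ext_iff] at hc
    obtain ⟨h1, h2⟩ := hc
    simp only at h1 h2
    have h3 : (2:ℝ) • a = (a + b) + (a - b) := by module
    rw [h1, h2, add_zero] at h3
    have ha0 : a = 0 := by
      rcases smul_eq_zero.mp h3 with h | h
      · norm_num at h
      · exact h
    rw [ha0, norm_zero] at ha
    norm_num at ha
  · have e1 : (a + b) + (a - b) = (2:ℝ) • a := by module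
    have e2 : (a + b) - (a - b) = (2:ℝ) • b := by module
    rw [e1, e2, norm_smul, norm_smul, ha, hb]
  · have e1 : t • (a + b) + (1 - t) • (a - b) = a - (1 - 2*t) • b := by module
    have e2 : (1 - t) • (a + b) + t • (a - b) = a + (1 - 2*t) • b := by module
    have e3 : (a + b) + (a - b) = (2:ℝ) • a := by module
    rw [e1, e2, e3, norm_smul, ha]
    simp only [Real.norm_eq_abs]
    rw [show |(2:ℝ)| = 2 by norm_num]
    ring

lemma rho_bddAbove (τ : ℝ) :
    BddAbove { r : ℝ | ∃ x y : X, ‖x‖ = 1 ∧ ‖y‖ = 1 ∧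
      r = (‖x + τ • y‖ + ‖x - τ • y‖) / 2 - 1 } := by
  refine ⟨|τ|, ?_⟩
  rintro r ⟨x, y, hx, hy, rfl⟩
  have h1 := norm_add_le x (τ • y)
  have h2 := norm_sub_le x (τ • y)
  rw [norm_smul, hx, hy, Real.norm_eq_abs] at h1 h2
  linarith

variable [Nontrivial X]

lemma exists_unit_vec : ∃ a : X, ‖a‖ = 1 := by
  obtain ⟨x, hx⟩ := exists_ne (0:X)
  refine ⟨‖x‖⁻¹ • x, ?_⟩
  rw [norm_smul, Real.norm_eq_abs, abs_of_nonneg (by positivity)]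
  exact inv_mul_cancel₀ (norm_ne_zero_iff.mpr hx)

lemma rho_nonneg (τ : ℝ) : 0 ≤ rhoX X τ := by
  obtain ⟨a, ha⟩ := exists_unit_vec (X := X)
  have hmem : (‖a + τ • a‖ + ‖a - τ • a‖) / 2 - 1 ∈
      { r : ℝ | ∃ x y : X, ‖x‖ = 1 ∧ ‖y‖ = 1 ∧
        r = (‖x + τ • y‖ + ‖x - τ • y‖) / 2 - 1 } := ⟨a, a, ha, ha, rfl⟩
  have hle := le_csSup (rho_bddAbove τ) hmem
  have he : (0:ℝ) ≤ (‖a + τ • a‖ + ‖a - τ • a‖) / 2 - 1 := by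
    have h2 : (2:ℝ) • a = (a + τ • a) + (a - τ • a) := by module
    have := norm_add_le (a + τ • a) (a - τ • a)
    rw [← h2, norm_smul, ha] at this
    simp only [Real.norm_eq_abs] at this
    rw [show |(2:ℝ)| = 2 by norm_num] at this
    linarith
  exact le_trans he hle

lemma rho_le (τ : ℝ) : rhoX X τ ≤ 2 * CZI X ((1 - τ)/2) - 1/2 + τ^2/2 := by
  obtain ⟨a0, ha0⟩ := exists_unit_vec (X := X)
  rw [rhoX]
  refine csSup_le ⟨(‖a0 + τ • a0‖ + ‖a0 - τ • a0‖)/2 - 1, a0, a0, ha0, ha0, rfl⟩ ?_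
  rintro r ⟨a, b, ha, hb, rfl⟩
  set t : ℝ := (1 - τ)/2 with ht
  have hτt : 1 - 2*t = τ := by rw [ht]; ring
  have hmem := czi_elem (X := X) t ha hb
  rw [hτt] at hmem
  have hle : ‖a + τ • b‖ * ‖a - τ • b‖ / 4 ≤ CZI X t := le_csSup (czi_bddAbove t) hmem
  set p := ‖a + τ • b‖
  set q := ‖a - τ • b‖
  have hpq2 : 2 ≤ p + q := by
    have h2 : (2:ℝ) • a = (a + τ • b) + (a - τ • b) := by module
    have := norm_add_le (a + τ • b) (a - τ • b)
    rw [← h2, norm_smul, ha] at this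
    simp only [Real.norm_eq_abs] at this
    rw [show |(2:ℝ)| = 2 by norm_num] at this
    linarith
  have hdiff : |p - q| ≤ 2 * |τ| := by
    have h1 := abs_norm_sub_norm_le (a + τ • b) (a - τ • b)
    have h2 : (a + τ • b) - (a - τ • b) = (2*τ) • b := by module
    rw [h2, norm_smul, hb, mul_one, Real.norm_eq_abs, abs_mul] at h1
    rw [show |(2:ℝ)| = 2 by norm_num] at h1
    exact h1
  have hdiffsq : (p - q)^2 ≤ 4 * τ^2 := by
    have hsq := mul_self_le_mul_self (abs_nonneg (p - q)) hdiff
    nlinarith [hsq, sq_abs (p - q), sq_abs τ]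
  nlinarith [hle, hpq2, hdiffsq, sq_nonneg (p + q - 2)]

end Aux

theorem stmt_14 (X : Type*) [NormedAddCommGroup X] [NormedSpace ℝ X]
    [CompleteSpace X] [Nontrivial X]
    (h : Tendsto (fun t : ℝ => (2 * CZI X t - 1 / 2) / (1 - 2 * t))
      (nhdsWithin (1 / 2) (Iio (1 / 2))) (nhds 0)) :
    Tendsto (fun t : ℝ => rhoX X t / t) (nhdsWithin 0 (Ioi 0)) (nhds 0) := by
  have hmap : Tendsto (fun τ : ℝ => (1 - τ)/2) (nhdsWithin 0 (Ioi 0))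
      (nhdsWithin (1/2) (Iio (1/2))) := by
    apply tendsto_nhdsWithin_of_tendsto_nhds_of_eventually_within
    · have hc : Tendsto (fun τ : ℝ => (1 - τ)/2) (nhds 0) (nhds ((1 - 0)/2)) := by
        exact ((tendsto_const_nhds.sub tendsto_id).div_const 2)
      norm_num at hc
      exact hc.mono_left nhdsWithin_le_nhds
    · filter_upwards [self_mem_nhdsWithin] with τ hτ
      have : (0:ℝ) < τ := hτ
      simp only [mem_Iio]
      linarith
  have h1 : Tendsto (fun τ : ℝ => (2 * CZI X ((1 - τ)/2) - 1/2) / τ)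
      (nhdsWithin 0 (Ioi 0)) (nhds 0) := by
    have hcomp := h.comp hmap
    refine hcomp.congr fun τ => ?_
    simp only [Function.comp]
    rw [show 1 - 2 * ((1 - τ)/2) = τ by ring]
  have h2 : Tendsto (fun τ : ℝ => (2 * CZI X ((1 - τ)/2) - 1/2) / τ + τ/2)
      (nhdsWithin 0 (Ioi 0)) (nhds 0) := by
    have h3 : Tendsto (fun τ : ℝ => τ/2) (nhdsWithin 0 (Ioi 0)) (nhds 0) := by
      have h4' := (continuous_id.tendsto (0:ℝ)).div_const 2
      have h4 := h4'.mono_left (nhdsWithin_le_nhds (s := Ioi (0:ℝ)))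
      norm_num at h4 ⊢
      exact h4
    simpa using h1.add h3
  apply squeeze_zero' ?_ ?_ h2
  · filter_upwards [self_mem_nhdsWithin] with τ hτ
    exact div_nonneg (rho_nonneg τ) (le_of_lt hτ)
  · filter_upwards [self_mem_nhdsWithin] with τ hτ
    have hτ0 : (0:ℝ) < τ := hτ
    have hr := rho_le (X := X) τ
    calc rhoX X τ / τ ≤ (2 * CZI X ((1 - τ)/2) - 1/2 + τ^2/2) / τ :=
          (div_le_div_iff_of_pos_right hτ0).mpr hr
      _ = (2 * CZI X ((1 - τ)/2) - 1/2) / τ + τ/2 := by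
          field_simp
end
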